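/- The minimal cardinality of a γ-family 𝒜 ⊆ {0,1}^{ℕ×ℕ} which is not finitely τ-diagonalizable is exactly 𝔟. -/

import Mathlib

open Filter Set

/-- `f ≤* g`: `f n ≤ g n` for all but finitely many `n`. -/
def LeStar (f g : ℕ → ℕ) : Prop := ∀ᶠ n in Filter.atTop, f n ≤ g n

/-- A subset of Baire space is bounded if it has a `≤*`-upper bound. -/
def BddFam (B : Set (ℕ → ℕ)) : Prop := ∃ g : ℕ → ℕ, ∀ f ∈ B, LeStar f g

/-- A subset of Baire space is dominating if every function is `≤*` below some member. -/
def DominatingFam (D : Set (ℕ → ℕ)) : Prop := ∀ g : ℕ → ℕ, ∃ f ∈ D, LeStar g f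

/-- An open cover of a topological space. -/
def IsOpenCover {X : Type*} [TopologicalSpace X] (𝒰 : Set (Set X)) : Prop :=
  (∀ U ∈ 𝒰, IsOpen U) ∧ ⋃₀ 𝒰 = Set.univ

/-- The cover `𝒰` contains a finite subcover. -/
def HasFinSubcover {X : Type*} (𝒰 : Set (Set X)) : Prop :=
  ∃ ℱ ⊆ 𝒰, ℱ.Finite ∧ ⋃₀ ℱ = Set.univ

/-- The Hurewicz property `Ufin(O,Γ)`. -/
def UfinOGamma (X : Type*) [TopologicalSpace X] : Prop :=
  ∀ 𝒰 : ℕ → Set (Set X),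
    (∀ n, IsOpenCover (𝒰 n)) → (∀ n, ¬ HasFinSubcover (𝒰 n)) →
    ∃ ℱ : ℕ → Set (Set X),
      (∀ n, ℱ n ⊆ 𝒰 n ∧ (ℱ n).Finite) ∧
      ∀ x : X, ∀ᶠ n in Filter.atTop, x ∈ ⋃₀ ℱ n

/-- A `γ`-array: `A : {0,1}^{ℕ×ℕ}` with `(∀ n)(∀^∞ m) A(n,m) = 1`. -/
def GammaArray (A : ℕ × ℕ → Bool) : Prop :=
  ∀ n : ℕ, ∀ᶠ m in Filter.atTop, A (n, m) = true

/-- A `γ`-family: a family of `γ`-arrays. -/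
def GammaFamily (𝒜 : Set (ℕ × ℕ → Bool)) : Prop := ∀ A ∈ 𝒜, GammaArray A

/-- A family `𝒜 ⊆ {0,1}^{ℕ×ℕ}` is finitely `τ`-diagonalizable if there are finite sets
`F n ⊆ ℕ` such that (a) each `A ∈ 𝒜` has `(∃^∞ n)(∃ m ∈ F n) A(n,m) = 1`, and (b) any two
members of `𝒜` are comparable on the `F n`'s, eventually in `n`. -/
def FinitelyTauDiagonalizable (𝒜 : Set (ℕ × ℕ → Bool)) : Prop :=
  ∃ F : ℕ → Finset ℕ,
    (∀ A ∈ 𝒜, ∃ᶠ n in Filter.atTop, ∃ m ∈ F n, A (n, m) = true) ∧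
    ∀ A ∈ 𝒜, ∀ B ∈ 𝒜,
      (∀ᶠ n in Filter.atTop, ∀ m ∈ F n, A (n, m) ≤ B (n, m)) ∨
      (∀ᶠ n in Filter.atTop, ∀ m ∈ F n, B (n, m) ≤ A (n, m))

/-- The unbounding number `𝔟`. -/
noncomputable def bCard : Cardinal :=
  sInf { c : Cardinal | ∃ B : Set (ℕ → ℕ), ¬ BddFam B ∧ Cardinal.mk B = c }

/-- The basic building block: a `γ`-array that is `false` exactly on the "band"
`[f n, g n)` in row `n`. For `f = 0` this is the threshold array of `g`. -/
def bandArr (f g : ℕ → ℕ) : ℕ × ℕ → Bool :=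
  fun p => decide ¬ (f p.1 ≤ p.2 ∧ p.2 < g p.1)

lemma bandArr_eq_true {f g : ℕ → ℕ} {n m : ℕ} :
    bandArr f g (n, m) = true ↔ ¬ (f n ≤ m ∧ m < g n) := by
  simp only [bandArr, decide_eq_true_eq]

lemma gammaArray_bandArr (f g : ℕ → ℕ) : GammaArray (bandArr f g) := by
  intro n
  rw [Filter.eventually_atTop]
  exact ⟨g n, fun m hm => bandArr_eq_true.mpr (by omega)⟩

lemma notBddFam_iff {B : Set (ℕ → ℕ)} :
    ¬ BddFam B ↔ ∀ g : ℕ → ℕ, ∃ f ∈ B, ∃ᶠ n in Filter.atTop, g n < f n := by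
  constructor
  · intro h g
    by_contra hcon
    push_neg at hcon
    apply h
    refine ⟨g, fun f hf => ?_⟩
    have h1 := hcon f hf
    exact h1.mono fun n hn => by omega
  · rintro h ⟨g, hg⟩
    obtain ⟨f, hf, hfreq⟩ := h g
    obtain ⟨n, hn1, hn2⟩ := (hfreq.and_eventually (hg f hf)).exists
    omega

/-- Any countable family is bounded. -/
lemma bddFam_of_countable {B : Set (ℕ → ℕ)} (hc : B.Countable) : BddFam B := by
  rcases B.eq_empty_or_nonempty with h | h
  · exact ⟨0, fun f hf => by simp [h] at hf⟩
  · obtain ⟨u, hu⟩ := hc.exists_eq_range h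
    refine ⟨fun n => Finset.sup (Finset.range (n + 1)) (fun i => u i n), fun f hf => ?_⟩
    rw [hu] at hf
    obtain ⟨i, rfl⟩ := hf
    rw [LeStar, Filter.eventually_atTop]
    exact ⟨i, fun n hn => Finset.le_sup (f := fun i => u i n)
      (Finset.mem_range.mpr (by omega))⟩

lemma bSet_nonempty :
    { c : Cardinal | ∃ B : Set (ℕ → ℕ), ¬ BddFam B ∧ Cardinal.mk B = c }.Nonempty := by
  refine ⟨Cardinal.mk (Set.univ : Set (ℕ → ℕ)), Set.univ, ?_, rfl⟩
  rintro ⟨g, hg⟩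
  have h := hg (fun n => g n + 1) (Set.mem_univ _)
  obtain ⟨n, hn⟩ := h.exists
  have hn' : g n + 1 ≤ g n := hn
  omega

lemma aleph0_le_bCard : Cardinal.aleph0 ≤ bCard := by
  refine le_csInf bSet_nonempty ?_
  rintro c ⟨B, hB, rfl⟩
  by_contra hlt
  exact hB (bddFam_of_countable
    ((Cardinal.lt_aleph0_iff_set_finite.mp (lt_of_not_ge hlt)).countable))

lemma bddFam_of_card_lt {C : Set (ℕ → ℕ)} (h : Cardinal.mk C < bCard) : BddFam C := by
  by_contra hC
  have hmem : Cardinal.mk C ∈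
      { c : Cardinal | ∃ B : Set (ℕ → ℕ), ¬ BddFam B ∧ Cardinal.mk B = c } :=
    ⟨C, hC, rfl⟩
  have h2 := csInf_le (OrderBot.bddBelow _) hmem
  unfold bCard at h
  exact absurd h2 (not_le_of_gt h)

/-- Lower bound: every non finitely-τ-diagonalizable γ-family has size at least `𝔟`. -/
lemma bCard_le_of_not_diag {𝒜 : Set (ℕ × ℕ → Bool)} (hγ : GammaFamily 𝒜)
    (hnd : ¬ FinitelyTauDiagonalizable 𝒜) : bCard ≤ Cardinal.mk 𝒜 := by
  by_contra h
  push_neg at h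
  apply hnd
  have hch : ∀ A : 𝒜, ∀ n, ∃ N, ∀ m ≥ N, (A : ℕ × ℕ → Bool) (n, m) = true :=
    fun A n => Filter.eventually_atTop.mp (hγ A.1 A.2 n)
  choose φ hφ using hch
  have hC : Cardinal.mk (Set.range φ) < bCard := lt_of_le_of_lt Cardinal.mk_range_le h
  obtain ⟨g, hg⟩ := bddFam_of_card_lt hC
  refine ⟨fun n => {g n}, ?_, ?_⟩
  · intro A hA
    have h1 := hg (φ ⟨A, hA⟩) (Set.mem_range_self _)
    refine (h1.mono ?_).frequently
    intro n hn
    exact ⟨g n, Finset.mem_singleton_self _, hφ ⟨A, hA⟩ n (g n) hn⟩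
  · intro A hA B hB
    left
    have h2 := hg (φ ⟨B, hB⟩) (Set.mem_range_self _)
    filter_upwards [h2] with n hn2 m hm
    rw [Finset.mem_singleton] at hm
    subst hm
    have hBt : B (n, g n) = true := hφ ⟨B, hB⟩ n (g n) hn2
    rw [hBt]
    exact Bool.le_true _

/-- The witness family built from a family `B` of functions: all band arrays with
endpoints in `insert 0 B`. -/
def witnessFam (B : Set (ℕ → ℕ)) : Set (ℕ × ℕ → Bool) :=
  (fun p : (ℕ → ℕ) × (ℕ → ℕ) => bandArr p.1 p.2) '' ((insert 0 B) ×ˢ (insert 0 B))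

lemma gammaFamily_witnessFam (B : Set (ℕ → ℕ)) : GammaFamily (witnessFam B) := by
  rintro A ⟨p, -, rfl⟩
  exact gammaArray_bandArr p.1 p.2

lemma mem_witnessFam {B : Set (ℕ → ℕ)} {f g : ℕ → ℕ}
    (hf : f ∈ insert 0 B) (hg : g ∈ insert 0 B) : bandArr f g ∈ witnessFam B :=
  ⟨(f, g), Set.mem_prod.mpr ⟨hf, hg⟩, rfl⟩

/-- The key combinatorial lemma: if `B` is an unbounded family of monotone functions,
then the associated witness family is not finitely τ-diagonalizable. -/
lemma not_diag_witnessFam {B : Set (ℕ → ℕ)} (hmono : ∀ f ∈ B, Monotone f)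
    (hunb : ¬ BddFam B) : ¬ FinitelyTauDiagonalizable (witnessFam B) := by
  rintro ⟨F, ha, hb⟩
  have hunb' := notBddFam_iff.mp hunb
  -- B is nonempty
  obtain ⟨f₁, hf₁, -⟩ := hunb' 0
  -- infinitely many n with F n nonempty
  have hE : ∃ᶠ n in Filter.atTop, (F n).Nonempty := by
    have h1 := ha (bandArr 0 f₁) (mem_witnessFam (Set.mem_insert _ _)
      (Set.mem_insert_of_mem _ hf₁))
    exact h1.mono fun n ⟨m, hm, _⟩ => ⟨m, hm⟩
  choose e he hFe using Filter.frequently_atTop.mp hE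
  -- find f₀ ∈ B frequently above the tops of the nonempty F's
  obtain ⟨f₀, hf₀B, hf₀⟩ := hunb' (fun n => (F (e n)).sup id)
  have hf₀mono := hmono f₀ hf₀B
  -- Step 1: frequently F m is nonempty and entirely below f₀ m
  have hP1 : ∃ᶠ m in Filter.atTop, (F m).Nonempty ∧ ∀ x ∈ F m, x < f₀ m := by
    rw [Filter.frequently_atTop]
    intro a
    obtain ⟨n, hn, hlt⟩ := Filter.frequently_atTop.mp hf₀ a
    refine ⟨e n, le_trans hn (he n), hFe n, fun x hx => ?_⟩
    have hx1 : x ≤ (F (e n)).sup id := Finset.le_sup (f := id) hx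
    have hx2 : f₀ n ≤ f₀ (e n) := hf₀mono (he n)
    omega
  -- Step 2: for each g ∈ B, eventually F n avoids the band [f₀ n, g n)
  have hstep2 : ∀ g ∈ B, ∀ᶠ n in Filter.atTop, ∀ m ∈ F n, ¬ (f₀ n ≤ m ∧ m < g n) := by
    intro g hg
    have hf₀mem : bandArr 0 f₀ ∈ witnessFam B :=
      mem_witnessFam (Set.mem_insert _ _) (Set.mem_insert_of_mem _ hf₀B)
    have hdmem : bandArr f₀ g ∈ witnessFam B :=
      mem_witnessFam (Set.mem_insert_of_mem _ hf₀B) (Set.mem_insert_of_mem _ hg)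
    rcases hb (bandArr 0 f₀) hf₀mem (bandArr f₀ g) hdmem with h | h
    · refine h.mono fun n hn m hm => ?_
      rintro ⟨h1, h2⟩
      have hA : bandArr 0 f₀ (n, m) = true := bandArr_eq_true.mpr (by omega)
      have h3 := hn m hm
      rw [hA] at h3
      have h4 : bandArr f₀ g (n, m) = true := by
        cases h5 : bandArr f₀ g (n, m)
        · rw [h5] at h3; exact absurd h3 (by decide)
        · rfl
      exact (bandArr_eq_true.mp h4) ⟨h1, h2⟩
    · exfalso
      obtain ⟨n, ⟨⟨x, hx⟩, hlow⟩, hn⟩ := (hP1.and_eventually h).exists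
      have h1 : bandArr f₀ g (n, x) = true := bandArr_eq_true.mpr (by
        have := hlow x hx; omega)
      have h2 : bandArr 0 f₀ (n, x) = false := by
        have := hlow x hx
        simp [bandArr]
        omega
      have h3 := hn x hx
      rw [h1, h2] at h3
      exact absurd h3 (by decide)
  -- Step 3: frequently some member of F n is at least f₀ n
  have hS : ∃ᶠ n in Filter.atTop, ∃ m ∈ F n, f₀ n ≤ m := by
    have h1 := ha (bandArr 0 f₀) (mem_witnessFam (Set.mem_insert _ _)
      (Set.mem_insert_of_mem _ hf₀B))
    refine h1.mono ?_
    rintro n ⟨m, hm, htrue⟩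
    refine ⟨m, hm, ?_⟩
    have h2 := bandArr_eq_true.mp htrue
    simp only [Pi.zero_apply] at h2
    omega
  choose s hs hsw using Filter.frequently_atTop.mp hS
  -- Step 4: B is bounded, contradiction
  apply hunb
  refine ⟨fun a => (F (s a)).sup id, fun g hg => ?_⟩
  obtain ⟨N, hN⟩ := Filter.eventually_atTop.mp (hstep2 g hg)
  rw [LeStar, Filter.eventually_atTop]
  refine ⟨N, fun a haN => ?_⟩
  obtain ⟨m, hm, hfm⟩ := hsw a
  have hsa : N ≤ s a := le_trans haN (hs a)
  have hnb := hN (s a) hsa m hm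
  have h1 : g (s a) ≤ m := by omega
  have h2 : g a ≤ g (s a) := hmono g hg (hs a)
  have h3 : m ≤ (F (s a)).sup id := Finset.le_sup (f := id) hm
  omega
theorem min_non_finitely_tau_diagonalizable_eq_b :
    sInf { c : Cardinal | ∃ 𝒜 : Set (ℕ × ℕ → Bool), GammaFamily 𝒜 ∧
      ¬ FinitelyTauDiagonalizable 𝒜 ∧ Cardinal.mk 𝒜 = c } = bCard := by
  classical
  obtain ⟨B₀, hB₀unb, hB₀card⟩ := csInf_mem bSet_nonempty
  set m : (ℕ → ℕ) → (ℕ → ℕ) := fun f n => Finset.sup (Finset.range (n + 1)) f with hm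
  set B₂ : Set (ℕ → ℕ) := m '' B₀ with hB₂
  have hmono : ∀ f ∈ B₂, Monotone f := by
    rintro f ⟨f₀, -, rfl⟩
    intro a b hab
    exact Finset.sup_mono (Finset.range_subset_range.mpr (by omega))
  have hle : ∀ f : ℕ → ℕ, ∀ n, f n ≤ m f n := by
    intro f n
    exact Finset.le_sup (Finset.mem_range.mpr (by omega))
  have hunb₂ : ¬ BddFam B₂ := by
    rintro ⟨g, hg⟩
    apply hB₀unb
    refine ⟨g, fun f hf => ?_⟩
    have h1 := hg (m f) ⟨f, hf, rfl⟩
    exact h1.mono fun n hn => le_trans (hle f n) hn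
  have hcard₂ : Cardinal.mk B₂ ≤ bCard := le_of_le_of_eq Cardinal.mk_image_le hB₀card
  have hγ := gammaFamily_witnessFam B₂
  have hnd := not_diag_witnessFam hmono hunb₂
  have hmemS : Cardinal.mk (witnessFam B₂) ∈
      { c : Cardinal | ∃ 𝒜 : Set (ℕ × ℕ → Bool), GammaFamily 𝒜 ∧
        ¬ FinitelyTauDiagonalizable 𝒜 ∧ Cardinal.mk 𝒜 = c } :=
    ⟨witnessFam B₂, hγ, hnd, rfl⟩
  have hs : Cardinal.mk (insert (0 : ℕ → ℕ) B₂ : Set (ℕ → ℕ)) ≤ bCard := by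
    calc Cardinal.mk (insert (0 : ℕ → ℕ) B₂ : Set (ℕ → ℕ))
        ≤ Cardinal.mk B₂ + 1 := Cardinal.mk_insert_le
      _ ≤ bCard + 1 := add_le_add_left hcard₂ 1
      _ = bCard := Cardinal.add_one_eq aleph0_le_bCard
  have hup : Cardinal.mk (witnessFam B₂) ≤ bCard := by
    calc Cardinal.mk (witnessFam B₂)
        ≤ Cardinal.mk ((insert (0:ℕ→ℕ) B₂) ×ˢ (insert (0:ℕ→ℕ) B₂) :
            Set ((ℕ → ℕ) × (ℕ → ℕ))) := Cardinal.mk_image_le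
      _ = Cardinal.mk (insert (0:ℕ→ℕ) B₂ : Set (ℕ → ℕ)) *
            Cardinal.mk (insert (0:ℕ→ℕ) B₂ : Set (ℕ → ℕ)) := by
          rw [Cardinal.mk_congr (Equiv.Set.prod _ _), Cardinal.mk_prod]
          simp
      _ ≤ bCard * bCard := mul_le_mul' hs hs
      _ = bCard := Cardinal.mul_eq_self aleph0_le_bCard
  refine le_antisymm (le_trans (csInf_le (OrderBot.bddBelow _) hmemS) hup) ?_
  refine le_csInf ⟨_, hmemS⟩ ?_
  rintro c ⟨𝒜, h1, h2, rfl⟩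
  exact bCard_le_of_not_diag h1 h2
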